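/- Let κ be a regular uncountable cardinal, B a subset of κ of cardinality κ, and G : κ → κ. Let a₀ ≤ b₀ and a₁ ≤ b₁ be integers with a₀ < a₁ and b₀ < b₁, and set n₀ = b₀ − a₀ + 1, n₁ = b₁ − a₁ + 1, n₂ = b₁ − a₀ + 1, r = n₂ − n₁ + 1 (so r ≥ 2). Let F₀ be a function of n₀ ordinal arguments and F₁ a function of n₁ ordinal arguments, both with values in a set A, such that for every increasing G-spread-apart sequence θ₁ < θ₂ < ... < θ_{n₂} of elements of B one has F₀(θ₁,...,θ_{n₀}) = F₁(θ_r,...,θ_{n₂}). Then for every sequence θ₀ < θ₁ < θ₂ < ... < θ_{n₀} of elements of B such that both tuples (θ₀, θ₂, θ₃, ..., θ_{n₀}) and (θ₁, θ₂, ..., θ_{n₀}) are G spread apart, one has F₀(θ₀, θ₂, θ₃, ..., θ_{n₀}) = F₀(θ₁, θ₂, ..., θ_{n₀}). -/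

import Mathlib

open Cardinal

/-- An increasing tuple `θ₁ < ... < θₙ` is `G` spread apart if `G 0 < θ₁` and
`G θᵢ₋₁ < θᵢ` for each `i`. -/
def SpreadApartFin {n : ℕ} (G : Ordinal → Ordinal) (θ : Fin n → Ordinal) : Prop :=
  List.Chain (fun a b => G a < b) 0 (List.ofFn θ)


lemma spreadApartFin_iff {n : ℕ} (G : Ordinal → Ordinal) (θ : Fin n → Ordinal) :
    SpreadApartFin G θ ↔ (∀ h : 0 < n, G 0 < θ ⟨0, h⟩) ∧
      ∀ (i : ℕ) (h : i + 1 < n), G (θ ⟨i, by omega⟩) < θ ⟨i + 1, h⟩ := by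
  unfold SpreadApartFin
  rw [List.Chain, List.isChain_iff_getElem]
  simp only [List.length_cons, List.length_ofFn]
  constructor
  · intro h
    exact ⟨fun h0 => by simpa using h 0 (by omega), fun i hi => by simpa using h (i + 1) (by omega)⟩
  · rintro ⟨h1, h2⟩ i hi
    cases i with
    | zero => simpa using h1 (by omega)
    | succ i => simpa using h2 i (by omega)

lemma strictMono_of_adj {n : ℕ} {f : Fin n → Ordinal}
    (h : ∀ (i : ℕ) (hi : i + 1 < n), f ⟨i, by omega⟩ < f ⟨i + 1, hi⟩) : StrictMono f := by
  rintro ⟨a, ha⟩ ⟨b, hb⟩ hab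
  simp only [Fin.mk_lt_mk] at hab
  have key : ∀ b, a + 1 ≤ b → ∀ hb : b < n, f ⟨a, ha⟩ < f ⟨b, hb⟩ := by
    intro b hab
    induction b, hab using Nat.le_induction with
    | base => intro hb; exact h a hb
    | succ b hab ih => intro hb; exact (ih (by omega)).trans (h b hb)
  exact key b hab hb

lemma exists_spread_seq (o : Ordinal) (B : Set Ordinal)
    (hub : ∀ γ < o, ∃ β ∈ B, γ < β) (hB : B ⊆ Set.Iio o)
    (G : Ordinal → Ordinal) (hG : ∀ α < o, G α < o)
    (γ : Ordinal) (hγ : γ < o) :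
    ∃ β : ℕ → Ordinal, (∀ i, β i ∈ B) ∧ max γ (G γ) < β 0 ∧
      ∀ i, max (β i) (G (β i)) < β (i + 1) := by
  choose! pick hpickB hpickgt using hub
  have hstep : ∀ δ, δ < o → pick (max δ (G δ)) ∈ B ∧ max δ (G δ) < pick (max δ (G δ)) := by
    intro δ hδ
    have hm : max δ (G δ) < o := max_lt hδ (hG δ hδ)
    exact ⟨hpickB _ hm, hpickgt _ hm⟩
  let β : ℕ → Ordinal := fun i => Nat.rec (pick (max γ (G γ))) (fun _ ih => pick (max ih (G ih))) i
  have hβ0 : β 0 ∈ B ∧ max γ (G γ) < β 0 := hstep γ hγ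
  have hβ : ∀ i, β i ∈ B ∧ max (β i) (G (β i)) < β (i + 1) := by
    intro i
    induction i with
    | zero => exact ⟨hβ0.1, (hstep _ (hB hβ0.1)).2⟩
    | succ i ih =>
      have hmem : β (i + 1) ∈ B := (hstep _ (hB ih.1)).1
      exact ⟨hmem, (hstep _ (hB hmem)).2⟩
  exact ⟨β, fun i => (hβ i).1, hβ0.2, fun i => (hβ i).2⟩

lemma extend_props {n₀ n₂ : ℕ} (hn0 : 1 ≤ n₀) (h12 : n₀ + 1 ≤ n₂)
    (G : Ordinal → Ordinal) (B : Set Ordinal) (p : Fin n₀ → Ordinal) (β : ℕ → Ordinal)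
    (γ₀ : Ordinal)
    (hpmono : StrictMono p) (hpmem : ∀ i, p i ∈ B) (hps : SpreadApartFin G p)
    (hlast : p ⟨n₀ - 1, by omega⟩ ≤ γ₀) (hGlast : G (p ⟨n₀ - 1, by omega⟩) ≤ γ₀)
    (hβB : ∀ i, β i ∈ B) (hβ0 : γ₀ < β 0)
    (hβstep : ∀ i, max (β i) (G (β i)) < β (i + 1)) :
    StrictMono (fun i : Fin n₂ => if h : i.1 < n₀ then p ⟨i.1, h⟩ else β (i.1 - n₀)) ∧
    (∀ i : Fin n₂, (if h : i.1 < n₀ then p ⟨i.1, h⟩ else β (i.1 - n₀)) ∈ B) ∧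
    SpreadApartFin G (fun i : Fin n₂ => if h : i.1 < n₀ then p ⟨i.1, h⟩ else β (i.1 - n₀)) := by
  obtain ⟨hps1, hps2⟩ := (spreadApartFin_iff G p).mp hps
  have hadj : ∀ (i : ℕ) (hi : i + 1 < n₂),
      (if h : i < n₀ then p ⟨i, h⟩ else β (i - n₀)) <
        (if h : i + 1 < n₀ then p ⟨i + 1, h⟩ else β (i + 1 - n₀)) ∧
      G (if h : i < n₀ then p ⟨i, h⟩ else β (i - n₀)) <
        (if h : i + 1 < n₀ then p ⟨i + 1, h⟩ else β (i + 1 - n₀)) := by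
    intro i hi
    by_cases h1 : i + 1 < n₀
    · rw [dif_pos (by omega), dif_pos h1]
      exact ⟨hpmono (Fin.mk_lt_mk.mpr (by omega)), hps2 i h1⟩
    · by_cases h2 : i < n₀
      · have hieq : i = n₀ - 1 := by omega
        have h0 : i + 1 - n₀ = 0 := by omega
        rw [dif_pos h2, dif_neg h1, h0]
        subst hieq
        exact ⟨lt_of_le_of_lt hlast hβ0, lt_of_le_of_lt hGlast hβ0⟩
      · have h3 : i + 1 - n₀ = (i - n₀) + 1 := by omega
        rw [dif_neg h2, dif_neg h1, h3]
        exact ⟨lt_of_le_of_lt (le_max_left _ _) (hβstep _),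
          lt_of_le_of_lt (le_max_right _ _) (hβstep _)⟩
  refine ⟨strictMono_of_adj fun i hi => (hadj i hi).1, ?_, ?_⟩
  · intro i
    by_cases h : i.1 < n₀
    · rw [dif_pos h]; exact hpmem _
    · rw [dif_neg h]; exact hβB _
  · rw [spreadApartFin_iff]
    refine ⟨fun h => ?_, fun i hi => (hadj i hi).2⟩
    simp only [dif_pos (show 0 < n₀ from hn0)]
    exact hps1 hn0

/-- The key step in the minimum-block-support lemma: if `F₀` (of `n₀ = b₀-a₀+1`
arguments) and `F₁` (of `n₁ = b₁-a₁+1` arguments) agree as indicated on all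
increasing `G` spread apart `n₂`-tuples from `B` (`n₂ = b₁-a₀+1`,
`r = n₂-n₁+1`), then `F₀` does not depend on its first argument on such
tuples: `F₀(θ₀,θ₂,…,θ_{n₀}) = F₀(θ₁,θ₂,…,θ_{n₀})`. -/
theorem drop_first_argument (κ : Cardinal.{0}) (hreg : κ.IsRegular) (hunc : ℵ₀ < κ)
    (B : Set Ordinal) (hB : B ⊆ Set.Iio κ.ord) (hBcard : #B = Cardinal.lift.{1} κ)
    (G : Ordinal → Ordinal) (hG : ∀ α < κ.ord, G α < κ.ord)
    (a₀ b₀ a₁ b₁ : ℤ) (h₀ : a₀ ≤ b₀) (h₁ : a₁ ≤ b₁) (ha : a₀ < a₁) (hb : b₀ < b₁)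
    (n₀ n₁ n₂ r : ℕ)
    (hn₀ : (n₀ : ℤ) = b₀ - a₀ + 1) (hn₁ : (n₁ : ℤ) = b₁ - a₁ + 1)
    (hn₂ : (n₂ : ℤ) = b₁ - a₀ + 1) (hr : (r : ℤ) = (n₂ : ℤ) - (n₁ : ℤ) + 1)
    {A : Type*} (F₀ : (Fin n₀ → Ordinal) → A) (F₁ : (Fin n₁ → Ordinal) → A)
    (hF : ∀ θ : Fin n₂ → Ordinal, StrictMono θ → (∀ i, θ i ∈ B) →
      SpreadApartFin G θ →
      F₀ (fun i => θ ⟨i.1, by have := i.isLt; omega⟩) =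
        F₁ (fun i => θ ⟨r - 1 + i.1, by have := i.isLt; omega⟩)) :
    ∀ θ : Fin (n₀ + 1) → Ordinal, StrictMono θ → (∀ i, θ i ∈ B) →
      SpreadApartFin G
        (fun i : Fin n₀ => if i.1 = 0 then θ 0 else θ ⟨i.1 + 1, by have := i.isLt; omega⟩) →
      SpreadApartFin G (fun i : Fin n₀ => θ ⟨i.1 + 1, by have := i.isLt; omega⟩) →
      F₀ (fun i : Fin n₀ =>
            if i.1 = 0 then θ 0 else θ ⟨i.1 + 1, by have := i.isLt; omega⟩) =
        F₀ (fun i : Fin n₀ => θ ⟨i.1 + 1, by have := i.isLt; omega⟩) := by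
  intro θ hmono hmem hs1 hs2
  have hn0pos : 1 ≤ n₀ := by omega
  have hn2 : n₀ + 1 ≤ n₂ := by omega
  have hrpos : 1 ≤ r - 1 := by omega
  have hrn : r - 1 + n₁ = n₂ := by omega
  -- B is unbounded below κ.ord
  have hub : ∀ γ < κ.ord, ∃ β ∈ B, γ < β := by
    intro γ hγ
    by_contra hcon
    push_neg at hcon
    have hsub : B ⊆ Set.Iio (γ + 1) := fun β hβ =>
      Order.lt_succ_iff.mpr (hcon β hβ)
    have h1 : #B ≤ #(Set.Iio (γ + 1)) := Cardinal.mk_le_mk_of_subset hsub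
    rw [Ordinal.mk_Iio_ordinal, hBcard] at h1
    have h2 : (γ + 1 : Ordinal).card < κ := by
      rw [← Cardinal.lt_ord]
      exact (Cardinal.isSuccLimit_ord hreg.aleph0_le).add_one_lt hγ
    exact absurd (Cardinal.lift_le.mp h1) (not_le.mpr h2)
  -- bound for the prefix
  have hθlt : ∀ i, θ i < κ.ord := fun i => hB (hmem i)
  set γ₀ : Ordinal := max (θ (Fin.last n₀)) (max (G (θ 0)) (G (θ (Fin.last n₀)))) with hγ₀def
  have hγ₀ : γ₀ < κ.ord :=
    max_lt (hθlt _) (max_lt (hG _ (hθlt _)) (hG _ (hθlt _)))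
  obtain ⟨β, hβB, hβ0, hβstep⟩ := exists_spread_seq κ.ord B hub hB G hG γ₀ hγ₀
  set p1 : Fin n₀ → Ordinal := fun i =>
    if i.1 = 0 then θ 0 else θ ⟨i.1 + 1, by have := i.isLt; omega⟩ with hp1def
  set p2 : Fin n₀ → Ordinal := fun i => θ ⟨i.1 + 1, by have := i.isLt; omega⟩ with hp2def
  set e1 : Fin n₂ → Ordinal := fun i =>
    if h : i.1 < n₀ then p1 ⟨i.1, h⟩ else β (i.1 - n₀) with he1def
  set e2 : Fin n₂ → Ordinal := fun i =>
    if h : i.1 < n₀ then p2 ⟨i.1, h⟩ else β (i.1 - n₀) with he2def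
  -- basic values
  have hγ₀le : ∀ i : Fin (n₀ + 1), θ i ≤ γ₀ := fun i =>
    le_max_of_le_left (hmono.monotone (Fin.le_last i))
  have hGθ0 : G (θ 0) ≤ γ₀ := le_max_of_le_right (le_max_left _ _)
  have hGθlast : G (θ (Fin.last n₀)) ≤ γ₀ := le_max_of_le_right (le_max_right _ _)
  have hβgt : ∀ x, x ≤ γ₀ → x < β 0 := fun x hx =>
    lt_of_le_of_lt (hx.trans (le_max_left _ _)) hβ0
  have hGγ₀ : ∀ i, β i < β (i+1) ∧ G (β i) < β (i+1) := fun i =>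
    ⟨lt_of_le_of_lt (le_max_left _ _) (hβstep i),
     lt_of_le_of_lt (le_max_right _ _) (hβstep i)⟩
  -- p1 last / p2 last facts
  have hp1last : ∀ h : n₀ - 1 < n₀, p1 ⟨n₀ - 1, h⟩ = θ 0 ∨
      p1 ⟨n₀ - 1, h⟩ = θ (Fin.last n₀) := by
    intro h
    rcases Nat.eq_or_lt_of_le hn0pos with h1 | h1
    · left; simp [hp1def, ← h1]
    · right
      have : n₀ - 1 ≠ 0 := by omega
      simp only [hp1def, this, if_false]
      congr 1
      ext
      simp [Fin.last]
      omega
  have hp1mono : StrictMono p1 := by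
    apply strictMono_of_adj
    intro i hi
    by_cases h : i = 0
    · subst h
      simp only [hp1def, if_pos rfl, if_neg one_ne_zero]
      exact hmono (show (0 : Fin (n₀ + 1)) < ⟨1 + 1, by omega⟩ by simp [Fin.lt_def])
    · simp only [hp1def, if_neg h, if_neg (Nat.succ_ne_zero i)]
      exact hmono (by simp [Fin.lt_def])
  have hp2mono : StrictMono p2 := by
    apply strictMono_of_adj
    intro i hi
    simp only [hp2def]
    exact hmono (by simp [Fin.lt_def])
  have hp1mem : ∀ i, p1 i ∈ B := by
    intro i; simp only [hp1def]; split <;> exact hmem _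
  have hp2mem : ∀ i, p2 i ∈ B := by
    intro i; simp only [hp2def]; exact hmem _
  have hp2last : ∀ h : n₀ - 1 < n₀, p2 ⟨n₀ - 1, h⟩ = θ (Fin.last n₀) := by
    intro h
    simp only [hp2def]
    congr 1
    ext
    simp [Fin.last]
    omega
  have hl1 : p1 ⟨n₀ - 1, by omega⟩ ≤ γ₀ := by
    rcases hp1last (by omega) with h | h <;> rw [h] <;> exact hγ₀le _
  have hgl1 : G (p1 ⟨n₀ - 1, by omega⟩) ≤ γ₀ := by
    rcases hp1last (by omega) with h | h <;> rw [h]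
    · exact hGθ0
    · exact hGθlast
  have hl2 : p2 ⟨n₀ - 1, by omega⟩ ≤ γ₀ := by rw [hp2last]; exact hγ₀le _
  have hgl2 : G (p2 ⟨n₀ - 1, by omega⟩) ≤ γ₀ := by rw [hp2last]; exact hGθlast
  have hβ0' : γ₀ < β 0 := lt_of_le_of_lt (le_max_left _ _) hβ0
  obtain ⟨m1, b1, s1⟩ := extend_props (n₂ := n₂) hn0pos hn2 G B p1 β γ₀
    hp1mono hp1mem hs1 hl1 hgl1 hβB hβ0' hβstep
  obtain ⟨m2, b2, s2⟩ := extend_props (n₂ := n₂) hn0pos hn2 G B p2 β γ₀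
    hp2mono hp2mem hs2 hl2 hgl2 hβB hβ0' hβstep
  have H1 := hF e1 m1 b1 s1
  have H2 := hF e2 m2 b2 s2
  have ep1 : (fun i : Fin n₀ => e1 ⟨i.1, by have := i.isLt; omega⟩) = p1 := by
    funext i
    rw [he1def]
    exact dif_pos i.isLt
  have ep2 : (fun i : Fin n₀ => e2 ⟨i.1, by have := i.isLt; omega⟩) = p2 := by
    funext i
    rw [he2def]
    exact dif_pos i.isLt
  have ht : (fun i : Fin n₁ => e1 ⟨r - 1 + i.1, by have := i.isLt; omega⟩) =
      (fun i : Fin n₁ => e2 ⟨r - 1 + i.1, by have := i.isLt; omega⟩) := by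
    funext i
    rw [he1def, he2def]
    dsimp only
    by_cases h : r - 1 + i.1 < n₀
    · rw [dif_pos h, dif_pos h, hp1def, hp2def]
      have hne : r - 1 + i.1 ≠ 0 := by omega
      simp only [hne, if_false]
    · rw [dif_neg h, dif_neg h]
  rw [ep1] at H1
  rw [ep2] at H2
  rw [ht] at H1
  exact H1.trans H2.symm
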